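/- For every r ∈ ℕ and every x, y ∈ ℕ with x even, x ≤ r, and 0 ≤ y - (x²+2x)/8 ≤ binom(x/2, 2) - 5(x/2)^{3/2}, there exists an (r, binom(r,2) - rx/2 + y)-triangle-regular graph, given as the Cartesian product of a clique on r - x/2 + 1 vertices with a degree-(x/2) triangle-regular graph. -/
import Mathlib


/-- A simple graph is `(r, c)`-triangle-regular if every vertex has degree `r`
and the open neighborhood of every vertex induces exactly `c` edges
(equivalently, `2 * c` ordered pairs of adjacent common neighbors). -/
def IsTriangleRegular {V : Type*} (G : SimpleGraph V) (r c : ℕ) : Prop :=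
  (∀ v, Nat.card {u // G.Adj v u} = r) ∧
  (∀ v, Nat.card {p : V × V // G.Adj v p.1 ∧ G.Adj v p.2 ∧ G.Adj p.1 p.2} = 2 * c)

/-- For every `r ∈ ℕ` and every `x, y ∈ ℕ` with `x` even, `x ≤ r`, and
`0 ≤ y - (x²+2x)/8 ≤ binom(x/2, 2) - 5(x/2)^{3/2}`, there exists an
`(r, binom(r,2) - rx/2 + y)`-triangle-regular graph. -/

lemma two_mul_choose_two (n : ℕ) : 2 * n.choose 2 = n * (n - 1) := by
  rw [Nat.choose_two_right, Nat.mul_div_cancel']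
  rcases n with _ | m
  · simp
  · simpa [Nat.succ_sub_one, mul_comm] using (Nat.even_mul_succ_self m).two_dvd

lemma sub_one_le_choose_two (n : ℕ) : n - 1 ≤ n.choose 2 := by
  have h := two_mul_choose_two n
  rcases Nat.lt_or_ge n 2 with h2 | h2
  · interval_cases n <;> simp
  · have h3 : 2 * (n - 1) ≤ n * (n - 1) := Nat.mul_le_mul_right _ h2
    omega

lemma choose_succ_two (a : ℕ) : (a + 1).choose 2 = a.choose 2 + a := by
  rw [Nat.choose_succ_succ]; norm_num [Nat.choose_one_right]; omega

/-- Every `k` with `k + 5d√d ≤ C(d,2)` is a sum of `C(aᵢ,2)` over a partition of `d`,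
using at most two large parts plus parts of size 3, 2, 1. -/
lemma partition_lemma (d k : ℕ) (H : k + 5 * d * Nat.sqrt d ≤ d.choose 2) :
    ∃ a b j t s, a + b + 3 * j + 2 * t + s = d ∧
      a.choose 2 + b.choose 2 + 3 * j + t = k := by
  rcases Nat.eq_zero_or_pos k with rfl | hk
  · exact ⟨0, 0, 0, 0, d, by omega, by simp⟩
  set s0 := Nat.sqrt d with hs0
  rw [mul_assoc] at H
  have hd1 : 1 ≤ d := by
    by_contra h
    have hd0 : d = 0 := by omega
    subst hd0; simp at H; omega
  have h2C : 2 * d.choose 2 = d * (d - 1) := two_mul_choose_two d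
  have h10 : 10 * s0 ≤ d - 1 := by
    have h3 : d * (10 * s0) ≤ d * (d - 1) := by
      have : 10 * (d * s0) ≤ d * (d - 1) := by omega
      linarith [this, (by ring : d * (10 * s0) = 10 * (d * s0))]
    exact Nat.le_of_mul_le_mul_left h3 hd1
  have hds : d ≤ s0 * s0 + 2 * s0 := by
    nlinarith [Nat.lt_succ_sqrt d]
  have hs9 : 9 ≤ s0 := by
    by_contra h
    push_neg at h
    have : s0 * s0 ≤ 8 * s0 := Nat.mul_le_mul_right _ (by omega)
    omega
  clear_value s0
  -- the largest part `a`
  set P := fun a : ℕ => a.choose 2 ≤ k with hP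
  set a := Nat.findGreatest P (k + 1) with hadef
  have ha1 : a.choose 2 ≤ k := Nat.findGreatest_spec (P := P) (m := 1) (by omega) (by simp [hP])
  have ha2 : 2 ≤ a := Nat.le_findGreatest (by omega) (by simp [hP]; omega)
  have ha3 : k < (a + 1).choose 2 := by
    rcases Nat.lt_or_ge (a + 1) (k + 2) with h | h
    · have h5 := Nat.findGreatest_is_greatest (P := P) (lt_add_one a) (by omega)
      rw [hP] at h5; omega
    · have := sub_one_le_choose_two (a + 1)
      omega
  have ha4 := choose_succ_two a
  clear_value a
  set k1 := k - a.choose 2 with hk1def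
  have hak : k1 < a := by omega
  have h2Ca : 2 * a.choose 2 = a * (a - 1) := two_mul_choose_two a
  have had : a ≤ d := by
    by_contra h
    push_neg at h
    have h1 : d * (d - 1) ≤ d * (a - 1) := Nat.mul_le_mul_left _ (by omega)
    have h2 : d * (a - 1) < a * (a - 1) := Nat.mul_lt_mul_of_lt_of_le h (le_refl _) (by omega)
    omega
  -- `a + 5 * s0 ≤ d`
  have key : a + 5 * s0 ≤ d := by
    by_contra hcon
    push_neg at hcon
    have e2 : 10 * (d : ℤ) * s0 ≤ ((d : ℤ) - a) * ((d : ℤ) + a - 1) := by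
      have c1 : ((d : ℤ) - a) * ((d : ℤ) + a - 1) = (d : ℤ) * (d - 1) - a * (a - 1) := by ring
      have c2 : ((d : ℤ) * (d - 1)) = 2 * (d.choose 2 : ℤ) := by
        have := h2C; zify [hd1] at this; linarith
      have c3 : ((a : ℤ) * (a - 1)) = 2 * (a.choose 2 : ℤ) := by
        have := h2Ca; zify [show 1 ≤ a by omega] at this; linarith
      have c4 : (k : ℤ) + 5 * (d * s0) ≤ (d.choose 2 : ℤ) := by exact_mod_cast H
      have c5 : (a.choose 2 : ℤ) ≤ (k : ℤ) := by exact_mod_cast ha1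
      rw [c1, c2, c3]; linarith
    have e3 : ((d : ℤ) - a) ≤ 5 * s0 - 1 := by
      have : (d : ℤ) < a + 5 * s0 := by exact_mod_cast hcon
      linarith
    have e4 : ((d : ℤ) + a - 1) ≤ 2 * d := by
      have : (a : ℤ) ≤ d := by exact_mod_cast had
      linarith
    have e5 : (0 : ℤ) ≤ (d : ℤ) - a := by
      have : (a : ℤ) ≤ d := by exact_mod_cast had
      linarith
    have haZ : (2 : ℤ) ≤ a := by exact_mod_cast ha2
    have hdZ : (1 : ℤ) ≤ d := by exact_mod_cast hd1
    have hsZ : (9 : ℤ) ≤ s0 := by exact_mod_cast hs9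
    have e6 : (0 : ℤ) ≤ (d : ℤ) + a - 1 := by linarith
    have e7 : ((d : ℤ) - a) * ((d : ℤ) + a - 1) ≤ (5 * s0 - 1) * (2 * d) :=
      mul_le_mul e3 e4 e6 (by linarith)
    nlinarith
  -- the second part `b`
  set Q := fun b : ℕ => b.choose 2 ≤ k1 with hQ
  set b := Nat.findGreatest Q (k1 + 1) with hbdef
  have hb1 : b.choose 2 ≤ k1 := Nat.findGreatest_spec (P := Q) (m := 1) (by omega) (by simp [hQ])
  have hb0 : 1 ≤ b := Nat.le_findGreatest (by omega) (by simp [hQ])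
  have hb3 : k1 < (b + 1).choose 2 := by
    rcases Nat.lt_or_ge (b + 1) (k1 + 2) with h | h
    · have h5 := Nat.findGreatest_is_greatest (P := Q) (lt_add_one b) (by omega)
      rw [hQ] at h5; omega
    · have := sub_one_le_choose_two (b + 1)
      omega
  have hb4 := choose_succ_two b
  clear_value b
  set k2 := k1 - b.choose 2 with hk2def
  have hk2 : k2 < b := by omega
  have h2Cb : 2 * b.choose 2 = b * (b - 1) := two_mul_choose_two b
  have hbs : b ≤ 2 * s0 := by
    by_contra h
    push_neg at h
    have h1 : b * (b - 1) ≤ 2 * k1 := by omega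
    have h2 : (2 * s0 + 1) * (2 * s0) ≤ b * (b - 1) :=
      Nat.mul_le_mul (by omega) (by omega)
    have h3 : (2 * s0 + 1) * (2 * s0) = 4 * (s0 * s0) + 2 * s0 := by ring
    omega
  refine ⟨a, b, k2 / 3, k2 % 3, d - (a + b + 3 * (k2 / 3) + 2 * (k2 % 3)), ?_, ?_⟩
  · have h1 : 3 * (k2 / 3) + k2 % 3 = k2 := by omega
    have h2 : a + b + 3 * (k2 / 3) + 2 * (k2 % 3) ≤ d := by
      have : k2 % 3 ≤ 2 := by omega
      omega
    omega
  · have h1 : 3 * (k2 / 3) + k2 % 3 = k2 := by omega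
    omega

open SimpleGraph

def ExTR (d k : ℕ) : Prop :=
  ∃ (V : Type) (_ : Fintype V) (_ : Nonempty V) (G : SimpleGraph V),
    IsTriangleRegular G d k

/-- the diagonal of a square -/
def diagEquiv (β : Type*) : {q : β × β // q.1 = q.2} ≃ β where
  toFun q := q.1.1
  invFun b := ⟨(b, b), rfl⟩
  left_inv := by rintro ⟨⟨a, b⟩, h⟩; cases h; rfl
  right_inv b := rfl

lemma card_offdiag {β : Type*} [Fintype β] [DecidableEq β] :
    Nat.card {q : β × β // q.1 ≠ q.2} = Fintype.card β * Fintype.card β - Fintype.card β := by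
  rw [Nat.card_eq_fintype_card]
  have h1 : Fintype.card {q : β × β // q.1 = q.2} = Fintype.card β :=
    Fintype.card_congr (diagEquiv β)
  have h2 := Fintype.card_subtype_compl (fun q : β × β => q.1 = q.2)
  simp only [h1, Fintype.card_prod] at h2
  convert h2 using 2

lemma ExTR_complete (m : ℕ) : ExTR m (m.choose 2) := by
  classical
  refine ⟨Fin (m + 1), inferInstance, inferInstance, ⊤, fun v => ?_, fun v => ?_⟩
  · have e : {u : Fin (m + 1) // (⊤ : SimpleGraph (Fin (m + 1))).Adj v u} ≃
        {u : Fin (m + 1) // ¬ u = v} :=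
      Equiv.subtypeEquivRight (fun u => by simp [top_adj, eq_comm, ne_eq])
    rw [Nat.card_congr e, Nat.card_eq_fintype_card, Fintype.card_subtype_compl,
      Fintype.card_subtype_eq, Fintype.card_fin]
    omega
  · have e : {p : Fin (m + 1) × Fin (m + 1) //
        (⊤ : SimpleGraph (Fin (m + 1))).Adj v p.1 ∧ (⊤ : SimpleGraph (Fin (m + 1))).Adj v p.2 ∧
          (⊤ : SimpleGraph (Fin (m + 1))).Adj p.1 p.2} ≃
        {q : {u : Fin (m + 1) // u ≠ v} × {u : Fin (m + 1) // u ≠ v} // q.1 ≠ q.2} :=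
      { toFun := fun p => ⟨(⟨p.1.1, p.2.1.ne'⟩, ⟨p.1.2, p.2.2.1.ne'⟩),
          fun h => p.2.2.2.ne (congrArg Subtype.val h)⟩
        invFun := fun q => ⟨(q.1.1.1, q.1.2.1), Ne.symm q.1.1.2, Ne.symm q.1.2.2,
          fun h => q.2 (Subtype.ext h)⟩
        left_inv := by rintro ⟨⟨x, y⟩, h⟩; rfl
        right_inv := by rintro ⟨⟨x, y⟩, h⟩; rfl }
    rw [Nat.card_congr e, card_offdiag]
    have hcard : Fintype.card {u : Fin (m + 1) // u ≠ v} = m := by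
      rw [Fintype.card_subtype_compl, Fintype.card_subtype_eq, Fintype.card_fin]
      omega
    rw [hcard]
    rcases m with _ | n
    · simp
    · have h2 := two_mul_choose_two (n + 1)
      simp only [Nat.add_sub_cancel] at h2
      have h3 : (n + 1) * (n + 1) - (n + 1) = (n + 1) * n := by
        have : (n + 1) * (n + 1) = (n + 1) * n + (n + 1) := by ring
        omega
      omega

section BoxProd

open SimpleGraph

variable {V W : Type} [Fintype V] [Fintype W]

/-- neighbors in the left layer -/
def leftNbrEquiv (G : SimpleGraph V) (H : SimpleGraph W) (x : V × W) :
    {u : V × W // G.Adj x.1 u.1 ∧ x.2 = u.2} ≃ {a : V // G.Adj x.1 a} where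
  toFun u := ⟨u.1.1, u.2.1⟩
  invFun a := ⟨(a.1, x.2), a.2, rfl⟩
  left_inv := by rintro ⟨⟨a, b⟩, h1, h2⟩; cases h2; rfl
  right_inv a := rfl

def rightNbrEquiv (G : SimpleGraph V) (H : SimpleGraph W) (x : V × W) :
    {u : V × W // H.Adj x.2 u.2 ∧ x.1 = u.1} ≃ {b : W // H.Adj x.2 b} where
  toFun u := ⟨u.1.2, u.2.1⟩
  invFun b := ⟨(x.1, b.1), b.2, rfl⟩
  left_inv := by rintro ⟨⟨a, b⟩, h1, h2⟩; cases h2; rfl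
  right_inv b := rfl

def leftTriEquiv (G : SimpleGraph V) (H : SimpleGraph W) (x : V × W) :
    {p : (V × W) × (V × W) //
      (G.Adj x.1 p.1.1 ∧ G.Adj x.1 p.2.1 ∧ G.Adj p.1.1 p.2.1) ∧
        p.1.2 = x.2 ∧ p.2.2 = x.2} ≃
    {q : V × V // G.Adj x.1 q.1 ∧ G.Adj x.1 q.2 ∧ G.Adj q.1 q.2} where
  toFun p := ⟨(p.1.1.1, p.1.2.1), p.2.1⟩
  invFun q := ⟨((q.1.1, x.2), (q.1.2, x.2)), q.2, rfl, rfl⟩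
  left_inv := by
    rintro ⟨⟨⟨a1, b1⟩, ⟨a2, b2⟩⟩, h, e1, e2⟩
    have e1' : b1 = x.2 := e1
    have e2' : b2 = x.2 := e2
    subst e1'; subst e2'; rfl
  right_inv q := rfl

def rightTriEquiv (G : SimpleGraph V) (H : SimpleGraph W) (x : V × W) :
    {p : (V × W) × (V × W) //
      (H.Adj x.2 p.1.2 ∧ H.Adj x.2 p.2.2 ∧ H.Adj p.1.2 p.2.2) ∧
        p.1.1 = x.1 ∧ p.2.1 = x.1} ≃
    {q : W × W // H.Adj x.2 q.1 ∧ H.Adj x.2 q.2 ∧ H.Adj q.1 q.2} where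
  toFun p := ⟨(p.1.1.2, p.1.2.2), p.2.1⟩
  invFun q := ⟨((x.1, q.1.1), (x.1, q.1.2)), q.2, rfl, rfl⟩
  left_inv := by
    rintro ⟨⟨⟨a1, b1⟩, ⟨a2, b2⟩⟩, h, e1, e2⟩
    have e1' : a1 = x.1 := e1
    have e2' : a2 = x.1 := e2
    subst e1'; subst e2'; rfl
  right_inv q := rfl

omit [Fintype V] [Fintype W] in
lemma boxProd_tri_iff (G : SimpleGraph V) (H : SimpleGraph W) (x : V × W)
    (p : (V × W) × (V × W)) :
    ((G □ H).Adj x p.1 ∧ (G □ H).Adj x p.2 ∧ (G □ H).Adj p.1 p.2) ↔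
      ((G.Adj x.1 p.1.1 ∧ G.Adj x.1 p.2.1 ∧ G.Adj p.1.1 p.2.1) ∧
        p.1.2 = x.2 ∧ p.2.2 = x.2) ∨
      ((H.Adj x.2 p.1.2 ∧ H.Adj x.2 p.2.2 ∧ H.Adj p.1.2 p.2.2) ∧
        p.1.1 = x.1 ∧ p.2.1 = x.1) := by
  simp only [boxProd_adj]
  constructor
  · rintro ⟨h1 | h1, h2 | h2, h3 | h3⟩
    · exact Or.inl ⟨⟨h1.1, h2.1, h3.1⟩, h1.2.symm, h2.2.symm⟩
    · obtain ⟨hh, -⟩ := h3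
      rw [← h1.2, ← h2.2] at hh
      exact (hh.ne rfl).elim
    · exact (h2.1.ne (h1.2.trans h3.2)).elim
    · exact (h1.1.ne (h3.2.trans h2.2.symm).symm).elim
    · exact (h1.1.ne (h2.2.trans h3.2.symm)).elim
    · exact (h2.1.ne (h1.2.trans h3.2)).elim
    · exact (h3.1.ne (h1.2.symm.trans h2.2)).elim
    · exact Or.inr ⟨⟨h1.1, h2.1, h3.1⟩, h1.2.symm, h2.2.symm⟩
  · rintro (⟨⟨h1, h2, h3⟩, e1, e2⟩ | ⟨⟨h1, h2, h3⟩, e1, e2⟩)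
    · exact ⟨Or.inl ⟨h1, e1.symm⟩, Or.inl ⟨h2, e2.symm⟩, Or.inl ⟨h3, e1.trans e2.symm⟩⟩
    · exact ⟨Or.inr ⟨h1, e1.symm⟩, Or.inr ⟨h2, e2.symm⟩, Or.inr ⟨h3, e1.trans e2.symm⟩⟩

lemma ExTR_box {d1 k1 d2 k2 : ℕ} (h1 : ExTR d1 k1) (h2 : ExTR d2 k2) :
    ExTR (d1 + d2) (k1 + k2) := by
  classical
  obtain ⟨V, _, _, G, hGd, hGt⟩ := h1
  obtain ⟨W, _, _, H, hHd, hHt⟩ := h2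
  refine ⟨V × W, inferInstance, inferInstance, G □ H, fun x => ?_, fun x => ?_⟩
  · have e1 : {u : V × W // (G □ H).Adj x u} ≃
        {u : V × W // (G.Adj x.1 u.1 ∧ x.2 = u.2) ∨ (H.Adj x.2 u.2 ∧ x.1 = u.1)} :=
      Equiv.subtypeEquivRight (fun u => boxProd_adj)
    have hdisj : Disjoint (fun u : V × W => G.Adj x.1 u.1 ∧ x.2 = u.2)
        (fun u : V × W => H.Adj x.2 u.2 ∧ x.1 = u.1) := by
      refine Pi.disjoint_iff.mpr fun u => Prop.disjoint_iff.mpr ?_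
      rintro ⟨⟨ha, -⟩, ⟨-, hb⟩⟩
      exact ha.ne hb
    have e2 := subtypeOrEquiv _ _ hdisj
    rw [Nat.card_congr (e1.trans e2), Nat.card_sum,
      Nat.card_congr (leftNbrEquiv G H x), Nat.card_congr (rightNbrEquiv G H x),
      hGd x.1, hHd x.2]
  · have e1 : {p : (V × W) × (V × W) //
        (G □ H).Adj x p.1 ∧ (G □ H).Adj x p.2 ∧ (G □ H).Adj p.1 p.2} ≃
        {p : (V × W) × (V × W) //
          ((G.Adj x.1 p.1.1 ∧ G.Adj x.1 p.2.1 ∧ G.Adj p.1.1 p.2.1) ∧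
            p.1.2 = x.2 ∧ p.2.2 = x.2) ∨
          ((H.Adj x.2 p.1.2 ∧ H.Adj x.2 p.2.2 ∧ H.Adj p.1.2 p.2.2) ∧
            p.1.1 = x.1 ∧ p.2.1 = x.1)} :=
      Equiv.subtypeEquivRight (fun p => boxProd_tri_iff G H x p)
    have hdisj : Disjoint
        (fun p : (V × W) × (V × W) =>
          (G.Adj x.1 p.1.1 ∧ G.Adj x.1 p.2.1 ∧ G.Adj p.1.1 p.2.1) ∧
            p.1.2 = x.2 ∧ p.2.2 = x.2)
        (fun p : (V × W) × (V × W) =>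
          (H.Adj x.2 p.1.2 ∧ H.Adj x.2 p.2.2 ∧ H.Adj p.1.2 p.2.2) ∧
            p.1.1 = x.1 ∧ p.2.1 = x.1) := by
      refine Pi.disjoint_iff.mpr fun p => Prop.disjoint_iff.mpr ?_
      rintro ⟨⟨⟨ha, -, -⟩, -⟩, ⟨-, hb, -⟩⟩
      exact ha.ne hb.symm
    have e2 := subtypeOrEquiv _ _ hdisj
    rw [Nat.card_congr (e1.trans e2), Nat.card_sum,
      Nat.card_congr (leftTriEquiv G H x), Nat.card_congr (rightTriEquiv G H x),
      hGt x.1, hHt x.2]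
    ring

end BoxProd

lemma ExTR_nsmul (n d k : ℕ) (h : ExTR d k) : ExTR (n * d) (n * k) := by
  induction n with
  | zero => simpa using ExTR_complete 0
  | succ n ih =>
    have := ExTR_box ih h
    have e1 : n * d + d = (n + 1) * d := by ring
    have e2 : n * k + k = (n + 1) * k := by ring
    rwa [e1, e2] at this

lemma ExTR_of_partition (d k : ℕ)
    (h : ∃ a b j t s, a + b + 3 * j + 2 * t + s = d ∧
      a.choose 2 + b.choose 2 + 3 * j + t = k) : ExTR d k := by
  obtain ⟨a, b, j, t, s, hsum, htri⟩ := h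
  have h3 : ExTR (3 * j) (3 * j) := by
    have := ExTR_nsmul j 3 3 (by simpa using ExTR_complete 3)
    rwa [mul_comm j 3] at this
  have h2 : ExTR (2 * t) t := by
    have := ExTR_nsmul t 2 1 (by simpa using ExTR_complete 2)
    rwa [mul_comm t 2, mul_one] at this
  have h1 : ExTR s 0 := by
    have := ExTR_nsmul s 1 0 (by simpa using ExTR_complete 1)
    rwa [mul_one, mul_zero] at this
  have := ExTR_box (ExTR_box (ExTR_box (ExTR_box (ExTR_complete a) (ExTR_complete b)) h3) h2) h1
  rwa [hsum, show a.choose 2 + b.choose 2 + 3 * j + t + 0 = k by omega] at this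

lemma int_choose_two (n : ℕ) : (n : ℤ) * ((n : ℤ) - 1) = 2 * (n.choose 2 : ℤ) := by
  rcases n with _ | m
  · simp
  · have h := two_mul_choose_two (m + 1)
    simp only [Nat.add_sub_cancel] at h
    have hZ : (2 : ℤ) * ((m + 1).choose 2 : ℤ) = ((m : ℤ) + 1) * m := by exact_mod_cast h
    push_cast
    linear_combination (-1 : ℤ) * hZ


theorem stmt11 (r x y : ℕ) (hx : Even x) (hxr : x ≤ r)
    (hy1 : ((x : ℝ) ^ 2 + 2 * (x : ℝ)) / 8 ≤ (y : ℝ))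
    (hy2 : (y : ℝ) - ((x : ℝ) ^ 2 + 2 * (x : ℝ)) / 8 ≤
      ((x / 2).choose 2 : ℝ) - 5 * ((x : ℝ) / 2) ^ ((3 : ℝ) / 2)) :
    ∃ c : ℕ, (c : ℤ) = (r.choose 2 : ℤ) - (r : ℤ) * (x : ℤ) / 2 + (y : ℤ) ∧
      ∃ (V : Type) (_ : Fintype V) (_ : Nonempty V) (G : SimpleGraph V),
        IsTriangleRegular G r c := by
  obtain ⟨d, rfl⟩ := hx
  have hx2 : (d + d) / 2 = d := by omega
  rw [hx2] at hy2
  have hdr : d ≤ r := by omega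
  -- `(d+1).choose 2` is `((d+d)^2 + 2(d+d))/8`
  have h8C : (8 : ℕ) * (d + 1).choose 2 = (d + d) ^ 2 + 2 * (d + d) := by
    have h := two_mul_choose_two (d + 1)
    simp only [Nat.add_sub_cancel] at h
    nlinarith
  have h8CR : (((d + 1).choose 2 : ℕ) : ℝ) = (((d + d : ℕ) : ℝ) ^ 2 + 2 * ((d + d : ℕ) : ℝ)) / 8 := by
    have := congrArg (fun n : ℕ => (n : ℝ)) h8C
    push_cast at this ⊢
    linarith
  have hyge : (d + 1).choose 2 ≤ y := by
    have h1 : (((d + 1).choose 2 : ℕ) : ℝ) ≤ (y : ℝ) := by rw [h8CR]; exact hy1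
    exact_mod_cast h1
  set k := y - (d + 1).choose 2 with hkdef
  have hkR : (k : ℝ) = (y : ℝ) - (((d + 1).choose 2 : ℕ) : ℝ) := by
    have : (k : ℤ) = (y : ℤ) - ((d + 1).choose 2 : ℤ) := by omega
    exact_mod_cast this
  -- the key natural-number inequality
  have hH : k + 5 * d * Nat.sqrt d ≤ d.choose 2 := by
    have hhalf : ((d + d : ℕ) : ℝ) / 2 = (d : ℝ) := by push_cast; ring
    rw [hhalf] at hy2
    have hpow : (5 : ℝ) * ((d : ℝ) * (Nat.sqrt d : ℝ)) ≤ 5 * (d : ℝ) ^ ((3 : ℝ) / 2) := by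
      rcases Nat.eq_zero_or_pos d with rfl | hd
      · simp
      · have hdpos : (0 : ℝ) < (d : ℝ) := by positivity
        have h1 : (d : ℝ) ^ ((3 : ℝ) / 2) = (d : ℝ) * Real.sqrt (d : ℝ) := by
          rw [show ((3 : ℝ) / 2) = 1 + 1 / 2 by norm_num, Real.rpow_add hdpos,
            Real.rpow_one, Real.sqrt_eq_rpow]
        rw [h1]
        have h2 : ((Nat.sqrt d : ℕ) : ℝ) ≤ Real.sqrt (d : ℝ) := Real.nat_sqrt_le_real_sqrt
        have h3 : (0 : ℝ) ≤ (d : ℝ) := le_of_lt hdpos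
        nlinarith
    have hmain : (k : ℝ) + 5 * ((d : ℝ) * (Nat.sqrt d : ℝ)) ≤ (d.choose 2 : ℝ) := by
      rw [hkR]
      have := hy2
      rw [← h8CR] at this
      linarith
    have : (k : ℝ) + ((5 * (d * Nat.sqrt d) : ℕ) : ℝ) ≤ ((d.choose 2 : ℕ) : ℝ) := by
      push_cast
      linarith
    have hn : k + 5 * (d * Nat.sqrt d) ≤ d.choose 2 := by exact_mod_cast this
    rwa [← mul_assoc] at hn
  -- build the graph
  have hEx : ExTR d k := ExTR_of_partition d k (partition_lemma d k hH)
  have hfinal := ExTR_box (ExTR_complete (r - d)) hEx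
  rw [show r - d + d = r by omega] at hfinal
  refine ⟨(r - d).choose 2 + k, ?_, hfinal⟩
  -- the integer identity
  have hdiv : (r : ℤ) * ((d : ℕ) + (d : ℕ) : ℕ) / 2 = (r : ℤ) * d := by
    have h1 : (r : ℤ) * (((d + d : ℕ) : ℤ)) = (r : ℤ) * d * 2 := by push_cast; ring
    rw [h1, Int.mul_ediv_cancel _ two_ne_zero]
  rw [hdiv]
  have e1 : ((r : ℤ) - d) * ((r : ℤ) - d - 1) = 2 * ((r - d).choose 2 : ℤ) := by
    have := int_choose_two (r - d)
    rwa [Nat.cast_sub hdr] at this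
  have e2 := int_choose_two r
  have e3 := int_choose_two (d + 1)
  have hkZ : (k : ℤ) = (y : ℤ) - ((d + 1).choose 2 : ℤ) := by omega
  push_cast
  push_cast at e3
  have h2 : 2 * ((r - d).choose 2 : ℤ) + 2 * (k : ℤ) =
      2 * (r.choose 2 : ℤ) - 2 * ((r : ℤ) * d) + 2 * (y : ℤ) := by
    linear_combination (-1 : ℤ) * e1 + e2 + e3 + 2 * hkZ
  linarith
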